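/- Let M_d ⊆ ℝ^d be the closure of the set {(p_1(x), p_2(x), …, p_d(x)) : n a positive integer, x ∈ ℝ^n}, and let N_d ⊆ ℝ^d be the closure of the set {(p_2(x), p_4(x), …, p_{2d}(x)) : n a positive integer, x ∈ ℝ^n}. Then both M_d and N_d are closed under addition (u, v ∈ S implies u + v ∈ S) and under coordinatewise (Hadamard) multiplication (u, v ∈ S implies (u_1·v_1, …, u_d·v_d) ∈ S). -/
import Mathlib


open scoped BigOperators

/-- `M_d`: the closure of the image at infinity of the Vandermonde map,
i.e. of `{(p₁(x), …, p_d(x)) : n ≥ 1, x ∈ ℝⁿ}`. -/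
def Mcell (d : ℕ) : Set (Fin d → ℝ) :=
  closure {y | ∃ n : ℕ, 0 < n ∧ ∃ x : Fin n → ℝ,
    ∀ k : Fin d, y k = ∑ i, x i ^ ((k : ℕ) + 1)}

/-- `N_d`: the Vandermonde cell, the closure of
`{(p₂(x), p₄(x), …, p_{2d}(x)) : n ≥ 1, x ∈ ℝⁿ}`. -/
def Ncell (d : ℕ) : Set (Fin d → ℝ) :=
  closure {y | ∃ n : ℕ, 0 < n ∧ ∃ x : Fin n → ℝ,
    ∀ k : Fin d, y k = ∑ i, x i ^ (2 * ((k : ℕ) + 1))}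

/-- The pre-closure power-sum set for a general exponent function `e`. -/
def Pset (d : ℕ) (e : ℕ → ℕ) : Set (Fin d → ℝ) :=
  {y | ∃ n : ℕ, 0 < n ∧ ∃ x : Fin n → ℝ, ∀ k : Fin d, y k = ∑ i, x i ^ e (k : ℕ)}

lemma Pset_add {d : ℕ} {e : ℕ → ℕ} {u v : Fin d → ℝ}
    (hu : u ∈ Pset d e) (hv : v ∈ Pset d e) : u + v ∈ Pset d e := by
  obtain ⟨n, hn, x, hx⟩ := hu
  obtain ⟨m, hm, x', hx'⟩ := hv
  refine ⟨n + m, by omega, Fin.append x x', fun k => ?_⟩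
  rw [Fin.sum_univ_add]
  simp only [Fin.append_left, Fin.append_right]
  simp [hx k, hx' k]

lemma Pset_mul {d : ℕ} {e : ℕ → ℕ} {u v : Fin d → ℝ}
    (hu : u ∈ Pset d e) (hv : v ∈ Pset d e) : (fun k => u k * v k) ∈ Pset d e := by
  obtain ⟨n, hn, x, hx⟩ := hu
  obtain ⟨m, hm, x', hx'⟩ := hv
  refine ⟨n * m, Nat.mul_pos hn hm, fun i =>
    x (finProdFinEquiv.symm i).1 * x' (finProdFinEquiv.symm i).2, fun k => ?_⟩
  have := Fintype.sum_equiv finProdFinEquiv.symm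
    (fun i : Fin (n * m) => (x (finProdFinEquiv.symm i).1 * x' (finProdFinEquiv.symm i).2) ^ e k)
    (fun p : Fin n × Fin m => (x p.1 * x' p.2) ^ e k) (fun i => rfl)
  rw [this, Fintype.sum_prod_type]
  simp only [mul_pow, ← Finset.sum_mul, ← Finset.mul_sum]
  rw [hx k, hx' k, Finset.sum_mul]

lemma closure_Pset_add_mul {d : ℕ} {e : ℕ → ℕ} {u v : Fin d → ℝ}
    (hu : u ∈ closure (Pset d e)) (hv : v ∈ closure (Pset d e)) :
    u + v ∈ closure (Pset d e) ∧ (fun k => u k * v k) ∈ closure (Pset d e) := by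
  constructor
  · exact map_mem_closure₂ (f := fun a b : Fin d → ℝ => a + b)
      (by fun_prop) hu hv
      (fun a ha b hb => Pset_add ha hb)
  · exact map_mem_closure₂ (f := fun a b : Fin d → ℝ => fun k => a k * b k)
      (by fun_prop) hu hv
      (fun a ha b hb => Pset_mul ha hb)

lemma Mcell_eq (d : ℕ) : Mcell d = closure (Pset d (fun k => k + 1)) := rfl
lemma Ncell_eq (d : ℕ) : Ncell d = closure (Pset d (fun k => 2 * (k + 1))) := rfl

/-- Both `M_d` and `N_d` are closed under addition and under
coordinatewise (Hadamard) multiplication. -/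
theorem Mcell_Ncell_add_hadamard (d : ℕ) :
    (∀ u ∈ Mcell d, ∀ v ∈ Mcell d,
        u + v ∈ Mcell d ∧ (fun k => u k * v k) ∈ Mcell d) ∧
    (∀ u ∈ Ncell d, ∀ v ∈ Ncell d,
        u + v ∈ Ncell d ∧ (fun k => u k * v k) ∈ Ncell d) := by
  constructor
  · intro u hu v hv
    rw [Mcell_eq] at *
    exact closure_Pset_add_mul hu hv
  · intro u hu v hv
    rw [Ncell_eq] at *
    exact closure_Pset_add_mul hu hv
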